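/- Let α > −1 and β > −1 be real numbers and n ≥ 1 an integer. Then Σ_{j=1}^{n} [(β+2)_{j−1} (α+β+2)_{j−1} / ((α+1)_{j−1} (j−1)!)] (2j+α+β) = (α+β+2) (β+3)_{n−1} (α+β+3)_{n−1} / ((α+1)_{n−1} (n−1)!). -/
import Mathlib


/-- The Pochhammer symbol (rising factorial) `(a)_k = a (a+1) ⋯ (a+k-1)`. -/
noncomputable def poch (a : ℝ) (k : ℕ) : ℝ := (ascPochhammer ℝ k).eval a

lemma poch_zero (a : ℝ) : poch a 0 = 1 := by simp [poch]

lemma poch_succ (a : ℝ) (k : ℕ) : poch a (k + 1) = poch a k * (a + k) := by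
  simp [poch, ascPochhammer_succ_right]

lemma poch_succ_left (a : ℝ) (k : ℕ) : poch a (k + 1) = a * poch (a + 1) k := by
  simp [poch, ascPochhammer_succ_left, Polynomial.eval_comp]

lemma poch_pos {a : ℝ} (ha : 0 < a) (k : ℕ) : 0 < poch a k := by
  induction k with
  | zero => simp [poch_zero]
  | succ k ih => rw [poch_succ]; positivity

/-- `Σ_{j=1}^{n} [(β+2)_{j−1} (α+β+2)_{j−1} / ((α+1)_{j−1} (j−1)!)] (2j+α+β)
 = (α+β+2) (β+3)_{n−1} (α+β+3)_{n−1} / ((α+1)_{n−1} (n−1)!)`. -/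
theorem a0_eigenvalue_sum (α β : ℝ) (hα : -1 < α) (hβ : -1 < β) (n : ℕ) (hn : 1 ≤ n) :
    ∑ j ∈ Finset.Icc 1 n,
      poch (β + 2) (j - 1) * poch (α + β + 2) (j - 1) /
        (poch (α + 1) (j - 1) * Nat.factorial (j - 1)) * (2 * j + α + β)
    = (α + β + 2) * poch (β + 3) (n - 1) * poch (α + β + 3) (n - 1) /
        (poch (α + 1) (n - 1) * Nat.factorial (n - 1)) := by
  have hα1 : (0:ℝ) < α + 1 := by linarith
  obtain ⟨m, rfl⟩ : ∃ m, n = m + 1 := ⟨n - 1, (Nat.succ_pred_eq_of_pos hn).symm⟩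
  clear hn
  induction m with
  | zero => simp [poch_zero]; ring
  | succ m ih =>
    rw [Finset.sum_Icc_succ_top (by omega : 1 ≤ m + 1 + 1), ih]
    have hp : 0 < poch (α + 1) m := poch_pos hα1 m
    have hf : (0:ℝ) < (Nat.factorial m : ℝ) := by exact_mod_cast Nat.factorial_pos m
    have e1 : (m + 1 + 1 - 1 : ℕ) = m + 1 := rfl
    have e2 : (m + 1 - 1 : ℕ) = m := rfl
    rw [e1, e2, poch_succ_left (β + 2), poch_succ_left (α + β + 2),
      poch_succ (α + 1), poch_succ (β + 3), poch_succ (α + β + 3),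
      Nat.factorial_succ]
    have h1 : β + 2 + 1 = β + 3 := by ring
    have h2 : α + β + 2 + 1 = α + β + 3 := by ring
    rw [h1, h2]
    have hden : poch (α + 1) m * (α + 1 + m) ≠ 0 := by positivity
    push_cast
    field_simp
    ring
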